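/- arXiv:1303.3992 — 2 statements merged into one kernel-verified Lean document; each statement's English description precedes it below -/
import Mathlib

section
/- Let μ be a Borel probability measure on ℝ and suppose that for μ-almost every x, liminf_{r→0} log μ(B(x,r))/log r ≥ 1. Then for every ε > 0 there exists a Borel set A with μ(A) > 1 − ε and a constant C > 0 such that the normalized restriction μ_ε = μ|_A / μ(A) satisfies μ_ε(B(x,r)) ≤ C r^{1−ε} for all x ∈ A and all r ∈ (0,1]; in particular the correlation dimension of μ_ε is at least 1 − ε. -/
open MeasureTheory Metric Filter
open scoped ENNReal Real Topology

/-- Lower local dimension of a measure at a point. -/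
noncomputable def locDim (μ : Measure ℝ) (x : ℝ) : ℝ :=
  Filter.liminf (fun r : ℝ => Real.log (μ (closedBall x r)).toReal / Real.log r)
    (𝓝[>] (0 : ℝ))

noncomputable def energyM (μ : Measure ℝ) (t : ℝ) : ℝ≥0∞ :=
  ∫⁻ x, ∫⁻ y, (edist x y) ^ (-t) ∂μ ∂μ

section Aux

lemma locDim_eventually (μ : Measure ℝ) [IsProbabilityMeasure μ] {x : ℝ} (hx : 1 ≤ locDim μ x)
    {ε : ℝ} (_hε : 0 < ε) (_hε1 : ε < 1) :
    ∀ᶠ r in 𝓝[>] (0:ℝ), μ (closedBall x r) ≤ ENNReal.ofReal (r ^ (1 - ε)) := by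
  set f : ℝ → ℝ := fun r => Real.log (μ (closedBall x r)).toReal / Real.log r with hf
  have hIoo : Set.Ioo (0:ℝ) 1 ∈ 𝓝[>] (0:ℝ) := Ioo_mem_nhdsGT_of_mem (by simp)
  have hf0 : ∀ r ∈ Set.Ioo (0:ℝ) 1, 0 ≤ f r := by
    intro r hr
    have hlogr : Real.log r < 0 := Real.log_neg hr.1 hr.2
    have hnum : Real.log (μ (closedBall x r)).toReal ≤ 0 := by
      apply Real.log_nonpos ENNReal.toReal_nonneg
      exact ENNReal.toReal_le_of_le_ofReal zero_le_one (by simp [prob_le_one])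
    exact div_nonneg_of_nonpos hnum hlogr.le
  have hbdd : (𝓝[>] (0:ℝ)).IsBoundedUnder (· ≥ ·) f :=
    ⟨0, eventually_map.2 (by filter_upwards [hIoo] with r hr using hf0 r hr)⟩
  have hev : ∀ᶠ r in 𝓝[>] (0:ℝ), (1 - ε) < f r := by
    by_contra h
    have hfreq : ∃ᶠ r in 𝓝[>] (0:ℝ), f r ≤ 1 - ε := by
      simpa [not_eventually, not_lt] using h
    have := liminf_le_of_frequently_le hfreq hbdd
    have : (1:ℝ) ≤ 1 - ε := le_trans hx this
    linarith
  filter_upwards [hev, hIoo] with r hr hr1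
  have hrpos := hr1.1
  have hlogr : Real.log r < 0 := Real.log_neg hr1.1 hr1.2
  set m : ℝ := (μ (closedBall x r)).toReal with hm
  rcases eq_or_lt_of_le (ENNReal.toReal_nonneg : 0 ≤ m) with h0 | h0
  · have : μ (closedBall x r) = 0 := by
      have hne : μ (closedBall x r) ≠ ⊤ := measure_ne_top μ _
      simpa [← h0.symm] using (ENNReal.toReal_eq_zero_iff _).mp h0.symm |>.resolve_right hne
    simp [this]
  · have hlt : Real.log m < (1 - ε) * Real.log r := by
      have h' : (1 - ε) < Real.log m / Real.log r := hr
      have := (lt_div_iff_of_neg hlogr).mp h'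
      linarith
    have : m < r ^ (1 - ε) := by
      have h2 : Real.log m < Real.log (r ^ (1 - ε)) := by
        rw [Real.log_rpow hrpos]; exact hlt
      exact (Real.log_lt_log_iff h0 (Real.rpow_pos_of_pos hrpos _)).mp h2
    calc μ (closedBall x r) = ENNReal.ofReal m := (ENNReal.ofReal_toReal (measure_ne_top μ _)).symm
      _ ≤ ENNReal.ofReal (r ^ (1 - ε)) := ENNReal.ofReal_le_ofReal this.le

lemma meas_cb (μ : Measure ℝ) [IsProbabilityMeasure μ] (q : ℝ) :
    Measurable fun x => μ (closedBall x q) := by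
  have hs : MeasurableSet {p : ℝ × ℝ | dist p.1 p.2 ≤ q} :=
    measurableSet_le (by fun_prop) measurable_const
  have := measurable_measure_prodMk_left (ν := μ) hs
  have he : ∀ x : ℝ, Prod.mk x ⁻¹' {p : ℝ × ℝ | dist p.1 p.2 ≤ q} = closedBall x q := by
    intro x; ext y; simp [closedBall, dist_comm]
  simpa [he] using this

lemma exists_n_mem (μ : Measure ℝ) [IsProbabilityMeasure μ] {x ε : ℝ} (hε : 0 < ε) (hε1 : ε < 1)
    (hx : ∀ᶠ r in 𝓝[>] (0:ℝ), μ (closedBall x r) ≤ ENNReal.ofReal (r ^ (1 - ε))) :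
    ∃ n : ℕ, ∀ q : ℚ, 0 < (q:ℝ) → (q:ℝ) ≤ 1 →
      μ (closedBall x (q:ℝ)) ≤ ENNReal.ofReal (n * (q:ℝ) ^ (1 - ε)) := by
  rw [eventually_iff, mem_nhdsGT_iff_exists_Ioo_subset] at hx
  obtain ⟨u, hu, hsub⟩ := hx
  set r₀ : ℝ := min u 1 / 2 with hr₀
  have hr₀pos : 0 < r₀ := by
    have : (0:ℝ) < min u 1 := lt_min hu one_pos
    positivity
  have hr₀lt1 : r₀ < 1 := by
    have : min u 1 ≤ 1 := min_le_right _ _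
    simp only [hr₀]; linarith
  have hr₀u : r₀ < u := by
    have h1 : min u 1 ≤ u := min_le_left _ _
    have : (0:ℝ) < min u 1 := lt_min hu one_pos
    simp only [hr₀]; linarith
  obtain ⟨n, hn⟩ := exists_nat_ge (max 1 (r₀ ^ (ε - 1)))
  refine ⟨n, fun q hq hq1 => ?_⟩
  have hn1 : (1:ℝ) ≤ n := le_trans (le_max_left _ _) hn
  have hnr : r₀ ^ (ε - 1) ≤ n := le_trans (le_max_right _ _) hn
  rcases lt_or_ge (q:ℝ) r₀ with hlt | hge
  · have hmem : (q:ℝ) ∈ Set.Ioo (0:ℝ) u := ⟨hq, hlt.trans hr₀u⟩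
    have := hsub hmem
    simp only [Set.mem_setOf_eq] at this
    refine this.trans (ENNReal.ofReal_le_ofReal ?_)
    nlinarith [Real.rpow_nonneg hq.le (1 - ε) (x := (q:ℝ))]
  · have h1 : (1:ℝ) ≤ n * (q:ℝ) ^ (1 - ε) := by
      have hq' : r₀ ^ (1 - ε) ≤ (q:ℝ) ^ (1 - ε) :=
        Real.rpow_le_rpow hr₀pos.le hge (by linarith)
      have : r₀ ^ (ε - 1) * r₀ ^ (1 - ε) = 1 := by
        rw [← Real.rpow_add hr₀pos]; norm_num
      nlinarith [Real.rpow_nonneg hr₀pos.le (ε - 1), Real.rpow_nonneg hr₀pos.le (1 - ε)]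
    calc μ (closedBall x (q:ℝ)) ≤ 1 := prob_le_one
      _ = ENNReal.ofReal 1 := ENNReal.ofReal_one.symm
      _ ≤ _ := ENNReal.ofReal_le_ofReal h1

lemma real_ball_bound (μ : Measure ℝ) {x ε : ℝ} (hε : 0 < ε) (hε1 : ε < 1) {N : ℕ} (hN : 1 ≤ N)
    (hx : ∀ q : ℚ, 0 < (q:ℝ) → (q:ℝ) ≤ 1 →
      μ (closedBall x (q:ℝ)) ≤ ENNReal.ofReal (N * (q:ℝ) ^ (1 - ε)))
    {r : ℝ} (hr : r ∈ Set.Ioc (0:ℝ) 1) :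
    μ (closedBall x r) ≤ ENNReal.ofReal ((2 * N) * r ^ (1 - ε)) := by
  have hN1 : (1:ℝ) ≤ N := by exact_mod_cast hN
  rcases lt_or_ge r (1/2) with h2 | h2
  · obtain ⟨q, hq1, hq2⟩ := exists_rat_btwn (by linarith [hr.1] : r < 2 * r)
    have hq0 : 0 < (q:ℝ) := hr.1.trans hq1
    have hqle1 : (q:ℝ) ≤ 1 := by linarith
    calc μ (closedBall x r) ≤ μ (closedBall x (q:ℝ)) :=
          measure_mono (closedBall_subset_closedBall hq1.le)
      _ ≤ ENNReal.ofReal (N * (q:ℝ) ^ (1 - ε)) := hx q hq0 hqle1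
      _ ≤ ENNReal.ofReal ((2 * N) * r ^ (1 - ε)) := by
          apply ENNReal.ofReal_le_ofReal
          have hqr : (q:ℝ) ^ (1 - ε) ≤ (2 * r) ^ (1 - ε) :=
            Real.rpow_le_rpow hq0.le hq2.le (by linarith)
          have h2r : (2 * r) ^ (1 - ε) = 2 ^ (1 - ε) * r ^ (1 - ε) :=
            Real.mul_rpow (by norm_num) hr.1.le
          have h21 : (2:ℝ) ^ (1 - ε) ≤ 2 := by
            calc (2:ℝ) ^ (1 - ε) ≤ 2 ^ (1:ℝ) :=
                  Real.rpow_le_rpow_of_exponent_le (by norm_num) (by linarith)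
              _ = 2 := Real.rpow_one 2
          have hrp : (0:ℝ) ≤ r ^ (1 - ε) := Real.rpow_nonneg hr.1.le _
          have hq2' : (q:ℝ) ^ (1 - ε) ≤ 2 * r ^ (1 - ε) := by
            rw [h2r] at hqr; nlinarith
          calc (N:ℝ) * (q:ℝ) ^ (1 - ε) ≤ (N:ℝ) * (2 * r ^ (1 - ε)) :=
                mul_le_mul_of_nonneg_left hq2' (by positivity)
            _ = (2 * N) * r ^ (1 - ε) := by ring
  · calc μ (closedBall x r) ≤ μ (closedBall x ((1:ℚ):ℝ)) := by
          apply measure_mono (closedBall_subset_closedBall (by exact_mod_cast hr.2))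
      _ ≤ ENNReal.ofReal (N * ((1:ℚ):ℝ) ^ (1 - ε)) := hx 1 (by norm_num) (by norm_num)
      _ ≤ ENNReal.ofReal ((2 * N) * r ^ (1 - ε)) := by
          apply ENNReal.ofReal_le_ofReal
          have : (1/2:ℝ) ≤ r ^ (1 - ε) := by
            calc (1/2:ℝ) = (1/2) ^ (1:ℝ) := by norm_num
              _ ≤ (1/2) ^ (1 - ε) := by
                  apply Real.rpow_le_rpow_of_exponent_ge (by norm_num) (by norm_num) (by linarith)
              _ ≤ r ^ (1 - ε) := Real.rpow_le_rpow (by norm_num) h2 (by linarith)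
          push_cast
          rw [Real.one_rpow]
          nlinarith

lemma ennreal_rpow_anti {a c : ℝ≥0∞} {s : ℝ} (hs : 0 ≤ s) (h : a ≤ c) :
    c ^ (-s) ≤ a ^ (-s) := by
  rw [ENNReal.rpow_neg, ENNReal.rpow_neg]
  exact ENNReal.inv_le_inv.mpr (ENNReal.rpow_le_rpow h hs)

lemma energy_aux (ν : Measure ℝ) {A : Set ℝ} {C ε t : ℝ}
    (hC : 0 < C) (_hε : 0 < ε) (_hε1 : ε < 1) (ht : 0 < t) (ht1 : t < 1 - ε)
    (hu1 : ν Set.univ = 1) (hA : ν Aᶜ = 0)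
    (hball : ∀ x ∈ A, ∀ r : ℝ, r ∈ Set.Ioc (0:ℝ) 1 →
      ν (closedBall x r) ≤ ENNReal.ofReal (C * r ^ (1 - ε))) :
    (∫⁻ x, ∫⁻ y, (edist x y) ^ (-t) ∂ν ∂ν) < ∞ := by
  set b : ℝ := 1/2 with hb
  have hb0 : (0:ℝ) < b := by norm_num
  have hb1 : b < 1 := by norm_num
  set u : ℝ≥0∞ := ENNReal.ofReal (b ^ (-t)) with hu
  set v : ℝ≥0∞ := ENNReal.ofReal (b ^ (1 - ε)) with hv
  set w : ℝ≥0∞ := ENNReal.ofReal (b ^ (1 - ε - t)) with hw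
  have huv : u * v = w := by
    rw [hu, hv, hw, ← ENNReal.ofReal_mul (Real.rpow_nonneg hb0.le _), ← Real.rpow_add hb0]
    ring_nf
  have hofreal_lt_one : ∀ s : ℝ, 0 < s → ENNReal.ofReal (b ^ s) < 1 := by
    intro s hs
    have h1 : b ^ s < 1 := Real.rpow_lt_one hb0.le hb1 hs
    calc ENNReal.ofReal (b ^ s) < ENNReal.ofReal 1 :=
          (ENNReal.ofReal_lt_ofReal_iff_of_nonneg (Real.rpow_nonneg hb0.le _)).mpr h1
      _ = 1 := ENNReal.ofReal_one
  have hw1 : w < 1 := hofreal_lt_one _ (by linarith)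
  have hv1 : v < 1 := hofreal_lt_one _ (by linarith)
  set K : ℝ≥0∞ := 1 + (u * ENNReal.ofReal C) * (1 - w)⁻¹ with hK
  have hKtop : K ≠ ⊤ := by
    have h1 : (1 - w) ≠ 0 := by
      rw [ne_eq, tsub_eq_zero_iff_le]
      exact not_le.mpr hw1
    have h2 : (1 - w)⁻¹ ≠ ⊤ := ENNReal.inv_ne_top.mpr h1
    rw [hK]
    exact ENNReal.add_ne_top.mpr ⟨ENNReal.one_ne_top, ENNReal.mul_ne_top
      (ENNReal.mul_ne_top ENNReal.ofReal_ne_top ENNReal.ofReal_ne_top) h2⟩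
  have hinner : ∀ x ∈ A, (∫⁻ y, (edist x y) ^ (-t) ∂ν) ≤ K := by
    intro x hxA
    have hcb : ∀ k : ℕ, ν (closedBall x (b ^ k)) ≤ ENNReal.ofReal C * v ^ k := by
      intro k
      have hbk0 : (0:ℝ) < b ^ k := pow_pos hb0 k
      have hbk1 : b ^ k ≤ 1 := pow_le_one₀ hb0.le hb1.le
      have h1 := hball x hxA (b ^ k) ⟨hbk0, hbk1⟩
      have h2 : (b ^ k : ℝ) ^ (1 - ε) = (b ^ (1 - ε)) ^ k := by
        rw [← Real.rpow_natCast b k, ← Real.rpow_mul hb0.le, mul_comm,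
          Real.rpow_mul hb0.le, Real.rpow_natCast]
      calc ν (closedBall x (b ^ k)) ≤ ENNReal.ofReal (C * (b ^ k) ^ (1 - ε)) := h1
        _ = ENNReal.ofReal C * v ^ k := by
            rw [ENNReal.ofReal_mul hC.le, h2,
              ENNReal.ofReal_pow (Real.rpow_nonneg hb0.le _), hv]
    have hx0 : ν {x} = 0 := by
      have hle : ∀ k : ℕ, ν {x} ≤ ENNReal.ofReal C * v ^ k := fun k =>
        (measure_mono (Set.singleton_subset_iff.mpr
          (mem_closedBall_self (pow_pos hb0 k).le))).trans (hcb k)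
      have htend : Tendsto (fun k : ℕ => ENNReal.ofReal C * v ^ k) atTop
          (𝓝 (ENNReal.ofReal C * 0)) :=
        ENNReal.Tendsto.const_mul (ENNReal.tendsto_pow_atTop_nhds_zero_of_lt_one hv1)
          (Or.inr ENNReal.ofReal_ne_top)
      have := ge_of_tendsto' htend hle
      simpa using this
    set S : ℕ → Set ℝ := fun k => {y | b ^ (k+1) < dist x y ∧ dist x y ≤ b ^ k} with hS
    have hcover : (Set.univ : Set ℝ) ⊆ (closedBall x 1)ᶜ ∪ ({x} ∪ ⋃ k : ℕ, S k) := by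
      intro y _
      by_cases h1 : dist x y ≤ 1
      · right
        by_cases h0 : y = x
        · left; simp [h0]
        · right
          have hd0 : 0 < dist x y := dist_pos.mpr (Ne.symm h0)
          have hex : ∃ k : ℕ, b ^ (k+1) < dist x y := by
            obtain ⟨n, hn⟩ := exists_pow_lt_of_lt_one hd0 hb1
            exact ⟨n, lt_of_le_of_lt
              (pow_le_pow_of_le_one hb0.le hb1.le (Nat.le_succ n)) hn⟩
          classical
          refine Set.mem_iUnion.mpr ⟨Nat.find hex, Nat.find_spec hex, ?_⟩
          rcases Nat.eq_zero_or_pos (Nat.find hex) with h | h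
          · rw [h]; simpa using h1
          · have := Nat.find_min hex (Nat.sub_lt h one_pos)
            have heq : Nat.find hex - 1 + 1 = Nat.find hex := Nat.succ_pred_eq_of_pos h
            rw [heq] at this
            exact not_lt.mp this
      · left
        simp only [Set.mem_compl_iff, mem_closedBall, dist_comm]
        exact fun hc => h1 hc
    have hU : (∫⁻ y in (closedBall x 1)ᶜ, (edist x y) ^ (-t) ∂ν) ≤ 1 := by
      have hle : ∀ y ∈ (closedBall x 1)ᶜ, (edist x y) ^ (-t) ≤ 1 := by
        intro y hy
        have h1 : (1:ℝ) < dist x y := by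
          simp only [Set.mem_compl_iff, mem_closedBall, dist_comm] at hy
          exact not_le.mp hy
        have h2 : (1:ℝ≥0∞) ≤ edist x y := by
          rw [edist_dist]
          calc (1:ℝ≥0∞) = ENNReal.ofReal 1 := ENNReal.ofReal_one.symm
            _ ≤ ENNReal.ofReal (dist x y) := ENNReal.ofReal_le_ofReal h1.le
        calc (edist x y) ^ (-t) ≤ (1:ℝ≥0∞) ^ (-t) := ennreal_rpow_anti ht.le h2
          _ = 1 := ENNReal.one_rpow _
      calc (∫⁻ y in (closedBall x 1)ᶜ, (edist x y) ^ (-t) ∂ν)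
          ≤ ∫⁻ _ in (closedBall x 1)ᶜ, (1:ℝ≥0∞) ∂ν :=
            setLIntegral_mono measurable_const hle
        _ = 1 * ν (closedBall x 1)ᶜ := setLIntegral_const _ _
        _ ≤ 1 := by
            rw [one_mul]
            calc ν (closedBall x 1)ᶜ ≤ ν Set.univ := measure_mono (Set.subset_univ _)
              _ = 1 := hu1
    have hSk : ∀ k : ℕ, (∫⁻ y in S k, (edist x y) ^ (-t) ∂ν)
        ≤ (u * ENNReal.ofReal C) * w ^ k := by
      intro k
      have hbk0 : (0:ℝ) < b ^ (k+1) := pow_pos hb0 _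
      have hle : ∀ y ∈ S k, (edist x y) ^ (-t) ≤ u ^ (k+1) := by
        intro y hy
        have h2 : ENNReal.ofReal (b ^ (k+1)) ≤ edist x y := by
          rw [edist_dist]
          exact ENNReal.ofReal_le_ofReal hy.1.le
        have h3 : (ENNReal.ofReal (b ^ (k+1))) ^ (-t) = u ^ (k+1) := by
          rw [ENNReal.ofReal_rpow_of_pos hbk0]
          have h4 : (b ^ (k+1) : ℝ) ^ (-t) = (b ^ (-t)) ^ (k+1) := by
            rw [← Real.rpow_natCast b (k+1), ← Real.rpow_mul hb0.le, mul_comm,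
              Real.rpow_mul hb0.le, Real.rpow_natCast]
          rw [h4, ENNReal.ofReal_pow (Real.rpow_nonneg hb0.le _), hu]
        calc (edist x y) ^ (-t) ≤ (ENNReal.ofReal (b ^ (k+1))) ^ (-t) :=
              ennreal_rpow_anti ht.le h2
          _ = u ^ (k+1) := h3
      have hsub : S k ⊆ closedBall x (b ^ k) := by
        intro y hy
        simp only [mem_closedBall, dist_comm]
        exact hy.2
      calc (∫⁻ y in S k, (edist x y) ^ (-t) ∂ν)
          ≤ ∫⁻ _ in S k, u ^ (k+1) ∂ν := setLIntegral_mono measurable_const hle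
        _ = u ^ (k+1) * ν (S k) := setLIntegral_const _ _
        _ ≤ u ^ (k+1) * (ENNReal.ofReal C * v ^ k) :=
            mul_le_mul_right ((measure_mono hsub).trans (hcb k)) _
        _ = (u * ENNReal.ofReal C) * w ^ k := by
            rw [← huv]; ring
    calc (∫⁻ y, (edist x y) ^ (-t) ∂ν)
        = ∫⁻ y in Set.univ, (edist x y) ^ (-t) ∂ν := (setLIntegral_univ _).symm
      _ ≤ ∫⁻ y in (closedBall x 1)ᶜ ∪ ({x} ∪ ⋃ k : ℕ, S k), (edist x y) ^ (-t) ∂ν :=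
          lintegral_mono_set hcover
      _ ≤ (∫⁻ y in (closedBall x 1)ᶜ, (edist x y) ^ (-t) ∂ν)
          + ∫⁻ y in {x} ∪ ⋃ k : ℕ, S k, (edist x y) ^ (-t) ∂ν :=
          lintegral_union_le _ _ _
      _ ≤ (∫⁻ y in (closedBall x 1)ᶜ, (edist x y) ^ (-t) ∂ν)
          + ((∫⁻ y in {x}, (edist x y) ^ (-t) ∂ν)
            + ∫⁻ y in ⋃ k : ℕ, S k, (edist x y) ^ (-t) ∂ν) :=
          add_le_add (le_refl _) (lintegral_union_le _ _ _)
      _ ≤ 1 + (0 + (u * ENNReal.ofReal C) * (1 - w)⁻¹) := by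
          refine add_le_add hU (add_le_add ?_ ?_)
          · rw [setLIntegral_measure_zero _ _ hx0]
          · calc (∫⁻ y in ⋃ k : ℕ, S k, (edist x y) ^ (-t) ∂ν)
                ≤ ∑' k : ℕ, ∫⁻ y in S k, (edist x y) ^ (-t) ∂ν := lintegral_iUnion_le _ _
              _ ≤ ∑' k : ℕ, (u * ENNReal.ofReal C) * w ^ k := ENNReal.tsum_le_tsum hSk
              _ = (u * ENNReal.ofReal C) * (1 - w)⁻¹ := by
                  rw [ENNReal.tsum_mul_left, ENNReal.tsum_geometric]
      _ = K := by rw [hK, zero_add]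
  have hae : ∀ᵐ x ∂ν, x ∈ A := by
    rw [ae_iff]
    exact hA
  calc (∫⁻ x, ∫⁻ y, (edist x y) ^ (-t) ∂ν ∂ν)
      ≤ ∫⁻ _, K ∂ν := lintegral_mono_ae (hae.mono fun x hx => hinner x hx)
    _ = K * ν Set.univ := lintegral_const K
    _ = K := by rw [hu1, mul_one]
    _ < ∞ := lt_top_iff_ne_top.mpr hKtop

end Aux

theorem stmt3
    (μ : Measure ℝ) [IsProbabilityMeasure μ]
    (hloc : ∀ᵐ x ∂μ, 1 ≤ locDim μ x) :
    ∀ ε : ℝ, 0 < ε → ∃ A : Set ℝ, ∃ C > (0 : ℝ), MeasurableSet A ∧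
      ENNReal.ofReal (1 - ε) < μ A ∧
      (∀ x ∈ A, ∀ r : ℝ, r ∈ Set.Ioc (0 : ℝ) 1 →
        ((μ A)⁻¹ • μ.restrict A) (closedBall x r) ≤ ENNReal.ofReal (C * r ^ (1 - ε))) ∧
      (∀ t : ℝ, 0 < t → t < 1 - ε → energyM ((μ A)⁻¹ • μ.restrict A) t < ∞) := by
  intro ε hε
  rcases le_or_gt 1 ε with hε1 | hε1
  · -- trivial case ε ≥ 1
    refine ⟨Set.univ, 1, one_pos, MeasurableSet.univ, ?_, ?_, ?_⟩
    · rw [measure_univ, ENNReal.ofReal_eq_zero.mpr (by linarith)]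
      exact zero_lt_one
    · intro x _ r hr
      have hν : ((μ Set.univ)⁻¹ • μ.restrict Set.univ) = μ := by
        simp [measure_univ, Measure.restrict_univ]
      rw [hν]
      have h1 : (1:ℝ) ≤ r ^ (1 - ε) := by
        calc (1:ℝ) = r ^ (0:ℝ) := (Real.rpow_zero r).symm
          _ ≤ r ^ (1 - ε) := Real.rpow_le_rpow_of_exponent_ge hr.1 hr.2 (by linarith)
      calc μ (closedBall x r) ≤ 1 := prob_le_one
        _ = ENNReal.ofReal 1 := ENNReal.ofReal_one.symm
        _ ≤ ENNReal.ofReal (1 * r ^ (1 - ε)) := ENNReal.ofReal_le_ofReal (by linarith)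
    · intro t ht ht1
      exfalso; linarith
  · -- main case ε < 1
    classical
    set F : ℕ → Set ℝ := fun n => {x | ∀ q : ℚ, 0 < (q:ℝ) → (q:ℝ) ≤ 1 →
      μ (closedBall x (q:ℝ)) ≤ ENNReal.ofReal (n * (q:ℝ) ^ (1 - ε))} with hF
    have hFmeas : ∀ n, MeasurableSet (F n) := by
      intro n
      have heq : F n = ⋂ q : ℚ, {x | 0 < (q:ℝ) → (q:ℝ) ≤ 1 →
          μ (closedBall x (q:ℝ)) ≤ ENNReal.ofReal (n * (q:ℝ) ^ (1 - ε))} := by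
        ext x; simp [hF, Set.mem_iInter]
      rw [heq]
      refine MeasurableSet.iInter fun q => ?_
      by_cases hq : 0 < (q:ℝ) ∧ (q:ℝ) ≤ 1
      · have : {x : ℝ | 0 < (q:ℝ) → (q:ℝ) ≤ 1 →
            μ (closedBall x (q:ℝ)) ≤ ENNReal.ofReal (n * (q:ℝ) ^ (1 - ε))}
            = {x : ℝ | μ (closedBall x (q:ℝ)) ≤ ENNReal.ofReal (n * (q:ℝ) ^ (1 - ε))} := by
          ext x; simp [hq.1, hq.2]
        rw [this]
        exact measurableSet_le (meas_cb μ q) measurable_const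
      · have : {x : ℝ | 0 < (q:ℝ) → (q:ℝ) ≤ 1 →
            μ (closedBall x (q:ℝ)) ≤ ENNReal.ofReal (n * (q:ℝ) ^ (1 - ε))} = Set.univ := by
          apply Set.eq_univ_of_forall
          intro x h1 h2
          exact absurd ⟨h1, h2⟩ hq
        rw [this]
        exact MeasurableSet.univ
    have hFmono : Monotone F := by
      intro n m hnm x hx q hq hq1
      refine (hx q hq hq1).trans (ENNReal.ofReal_le_ofReal ?_)
      have : (n:ℝ) ≤ m := by exact_mod_cast hnm
      have := Real.rpow_nonneg hq.le (1 - ε) (x := (q:ℝ))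
      nlinarith
    have hae : ∀ᵐ x ∂μ, x ∈ ⋃ n, F n := by
      filter_upwards [hloc] with x hx
      obtain ⟨n, hn⟩ := exists_n_mem μ hε hε1 (locDim_eventually μ hx hε hε1)
      exact Set.mem_iUnion.mpr ⟨n, hn⟩
    have hμU : μ (⋃ n, F n) = 1 := by
      rw [← prob_compl_eq_zero_iff (MeasurableSet.iUnion hFmeas)]
      rw [ae_iff] at hae
      simpa [Set.compl_def] using hae
    have htend := tendsto_measure_iUnion_atTop (μ := μ) hFmono
    rw [hμU] at htend
    have hlt1 : ENNReal.ofReal (1 - ε) < 1 := by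
      rw [← ENNReal.ofReal_one]
      exact (ENNReal.ofReal_lt_ofReal_iff (by norm_num)).mpr (by linarith)
    obtain ⟨N₀, hN₀⟩ := (htend.eventually (eventually_gt_nhds hlt1)).exists
    set N : ℕ := max N₀ 1 with hN
    have hN1 : 1 ≤ N := le_max_right _ _
    set A : Set ℝ := F N with hA
    have hAmeas : MeasurableSet A := hFmeas N
    have hμA : ENNReal.ofReal (1 - ε) < μ A :=
      lt_of_lt_of_le hN₀ (measure_mono (hFmono (le_max_left _ _)))
    have hA0 : μ A ≠ 0 := by
      have : (0:ℝ≥0∞) < ENNReal.ofReal (1 - ε) := ENNReal.ofReal_pos.mpr (by linarith)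
      exact (this.trans hμA).ne'
    have hAtop : μ A ≠ ⊤ := measure_ne_top μ A
    set ν : Measure ℝ := (μ A)⁻¹ • μ.restrict A with hν
    have hν1 : ν Set.univ = 1 := by
      rw [hν, Measure.smul_apply, Measure.restrict_apply_univ, smul_eq_mul]
      exact ENNReal.inv_mul_cancel hA0 hAtop
    have hνc : ν Aᶜ = 0 := by
      rw [hν, Measure.smul_apply, Measure.restrict_apply hAmeas.compl]
      simp
    set C : ℝ := (2 * N) / (1 - ε) with hC
    have hCpos : 0 < C := by
      have : (1:ℝ) ≤ N := by exact_mod_cast hN1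
      apply div_pos (by linarith) (by linarith)
    have hballν : ∀ x ∈ A, ∀ r : ℝ, r ∈ Set.Ioc (0:ℝ) 1 →
        ν (closedBall x r) ≤ ENNReal.ofReal (C * r ^ (1 - ε)) := by
      intro x hx r hr
      have h1 : μ (closedBall x r) ≤ ENNReal.ofReal ((2 * N) * r ^ (1 - ε)) :=
        real_ball_bound μ hε hε1 hN1 hx hr
      have hinv : (μ A)⁻¹ ≤ (ENNReal.ofReal (1 - ε))⁻¹ := ENNReal.inv_le_inv.mpr hμA.le
      calc ν (closedBall x r) = (μ A)⁻¹ * (μ.restrict A) (closedBall x r) := by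
            rw [hν, Measure.smul_apply, smul_eq_mul]
        _ ≤ (μ A)⁻¹ * μ (closedBall x r) := by
            apply mul_le_mul_right
            rw [Measure.restrict_apply measurableSet_closedBall]
            exact measure_mono Set.inter_subset_left
        _ ≤ (ENNReal.ofReal (1 - ε))⁻¹ * ENNReal.ofReal ((2 * N) * r ^ (1 - ε)) :=
            mul_le_mul' hinv h1
        _ = ENNReal.ofReal ((1 - ε)⁻¹ * ((2 * N) * r ^ (1 - ε))) := by
            rw [← ENNReal.ofReal_inv_of_pos (by linarith : (0:ℝ) < 1 - ε),
              ← ENNReal.ofReal_mul (inv_nonneg.mpr (by linarith : (0:ℝ) ≤ 1 - ε))]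
        _ = ENNReal.ofReal (C * r ^ (1 - ε)) := by
            congr 1
            rw [hC]; ring
    refine ⟨A, C, hCpos, hAmeas, hμA, hballν, ?_⟩
    intro t ht ht1
    rw [energyM, ← hν]
    exact energy_aux ν hCpos hε hε1 ht ht1 hν1 hνc hballν
end

section
/- Let 0 < λ < 1 and suppose θ = 1/λ satisfies: there exist ℓ ∈ ℕ and c > 0 such that for all sufficiently large N and all t ∈ [1, θ], the number of n ∈ {0,…,N−1} with ‖tθⁿ‖ ≥ 1/ℓ (distance to nearest integer) is at least cN. Let μ be the self-similar measure of the IFS (λx + a₁, …, λx + a_m) with distinct translations aᵢ including a₁ = 0 and a₂ = 1, and with strictly positive weights p. Then there exist C, s > 0 such that |μ̂(ξ)| ≤ C|ξ|^{−s} for all ξ ≠ 0. -/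
open MeasureTheory Metric Filter
open scoped ENNReal Real Classical

noncomputable def fourierM (μ : Measure ℝ) (ξ : ℝ) : ℂ :=
  ∫ x, Complex.exp ((Real.pi * ξ * x : ℝ) * Complex.I) ∂μ

/-- Distance from a real number to the nearest integer. -/
noncomputable def distInt (x : ℝ) : ℝ := |x - round x|

lemma integ (ν : Measure ℝ) [IsFiniteMeasure ν] (ξ : ℝ) :
    Integrable (fun x => Complex.exp ((Real.pi * ξ * x : ℝ) * Complex.I)) ν := by
  have hc : Continuous (fun x : ℝ => Complex.exp ((Real.pi * ξ * x : ℝ) * Complex.I)) := by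
    fun_prop
  refine (integrable_const (1 : ℝ)).mono' hc.aestronglyMeasurable ?_
  filter_upwards with x
  simp [Complex.norm_exp]

lemma fourier_le_one (μ : Measure ℝ) [IsProbabilityMeasure μ] (ξ : ℝ) :
    ‖fourierM μ ξ‖ ≤ 1 := by
  have := norm_integral_le_of_norm_le_const (μ := μ)
    (f := fun x => Complex.exp ((Real.pi * ξ * x : ℝ) * Complex.I)) (C := 1) ?_
  · simpa [fourierM] using this
  · filter_upwards with x; simp [Complex.norm_exp]

lemma funeq (lam : ℝ) (m : ℕ) (a : Fin m → ℝ) (p : Fin m → ℝ) (hp : ∀ i, 0 ≤ p i)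
    (μ : Measure ℝ) [IsProbabilityMeasure μ]
    (hss : μ = ∑ i : Fin m,
      ENNReal.ofReal (p i) • Measure.map (fun x => lam * x + a i) μ) (ξ : ℝ) :
    fourierM μ ξ = (∑ i, (p i : ℂ) * Complex.exp ((Real.pi * ξ * a i : ℝ) * Complex.I))
      * fourierM μ (lam * ξ) := by
  have hmeas : ∀ i : Fin m, Measurable (fun x : ℝ => lam * x + a i) := by
    intro i; fun_prop
  have hprob : ∀ i : Fin m, IsProbabilityMeasure (Measure.map (fun x : ℝ => lam * x + a i) μ) :=
    fun i => Measure.isProbabilityMeasure_map (hmeas i).aemeasurable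
  have key : fourierM μ ξ = ∑ i : Fin m, (ENNReal.ofReal (p i)).toReal •
      ∫ x, Complex.exp ((Real.pi * ξ * x : ℝ) * Complex.I)
        ∂(Measure.map (fun x : ℝ => lam * x + a i) μ) := by
    rw [fourierM]
    nth_rewrite 1 [hss]
    rw [integral_finset_sum_measure]
    · simp_rw [integral_smul_measure]
    · intro i _
      haveI := hprob i
      exact ((integ _ ξ).smul_measure (by simp : ENNReal.ofReal (p i) ≠ ⊤)).mono_measure le_rfl
  rw [key]
  rw [Finset.sum_mul]
  refine Finset.sum_congr rfl ?_
  intro i _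
  haveI := hprob i
  rw [integral_map (hmeas i).aemeasurable (integ _ ξ).aestronglyMeasurable]
  have : ∀ x : ℝ, Complex.exp ((Real.pi * ξ * (lam * x + a i) : ℝ) * Complex.I)
      = Complex.exp ((Real.pi * ξ * a i : ℝ) * Complex.I) *
        Complex.exp ((Real.pi * (lam * ξ) * x : ℝ) * Complex.I) := by
    intro x
    rw [← Complex.exp_add]
    congr 1
    push_cast
    ring
  simp_rw [this]
  rw [integral_const_mul]
  rw [ENNReal.toReal_ofReal (hp i), fourierM, Complex.real_smul]
  ring

lemma cos_le_of_distInt (ζ : ℝ) (ℓ : ℕ) (hℓ : 0 < ℓ) (hζ : 1 / (ℓ:ℝ) ≤ |ζ - round ζ|) :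
    Real.cos (Real.pi * ζ) ≤ Real.cos (Real.pi / ℓ) := by
  set k := round ζ with hk
  set r := ζ - k with hr
  have hr2 : |r| ≤ 1/2 := abs_sub_round ζ
  have hζr : ζ = r + k := by rw [hr]; ring
  have h1 : Real.cos (Real.pi * ζ) = (-1:ℝ)^k * Real.cos (Real.pi * r) := by
    rw [hζr, mul_add, mul_comm Real.pi (k:ℝ)]
    exact Real.cos_add_int_mul_pi _ _
  have hcosr : 0 ≤ Real.cos (Real.pi * r) := by
    apply Real.cos_nonneg_of_mem_Icc
    constructor
    · nlinarith [abs_le.1 hr2, Real.pi_pos]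
    · nlinarith [abs_le.1 hr2, Real.pi_pos]
  have h2 : (-1:ℝ)^k * Real.cos (Real.pi * r) ≤ Real.cos (Real.pi * r) := by
    rcases Int.even_or_odd k with he | ho
    · rw [he.neg_one_zpow]; simp
    · rw [Odd.neg_one_zpow ho]; nlinarith
  have h3 : Real.cos (Real.pi * r) ≤ Real.cos (Real.pi / ℓ) := by
    have habs : Real.cos (Real.pi * r) = Real.cos (Real.pi * |r|) := by
      rcases abs_cases r with ⟨h, _⟩ | ⟨h, _⟩
      · rw [h]
      · rw [h, mul_neg, Real.cos_neg]
    rw [habs]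
    apply Real.cos_le_cos_of_nonneg_of_le_pi
    · positivity
    · nlinarith [abs_le.1 hr2, Real.pi_pos]
    · have : (1:ℝ)/ℓ ≤ |r| := hζ
      rw [div_le_iff₀ (by exact_mod_cast hℓ)] at this
      rw [div_le_iff₀ (by exact_mod_cast hℓ : (0:ℝ) < ℓ)]
      nlinarith [Real.pi_pos]
  linarith [h1 ▸ le_trans h2 h3]

lemma Phi_le_one (m : ℕ) (a : Fin m → ℝ) (p : Fin m → ℝ) (hp : ∀ i, 0 ≤ p i)
    (hpsum : ∑ i, p i = 1) (ζ : ℝ) :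
    ‖∑ i, (p i : ℂ) * Complex.exp ((Real.pi * ζ * a i : ℝ) * Complex.I)‖ ≤ 1 := by
  calc ‖∑ i, (p i : ℂ) * Complex.exp ((Real.pi * ζ * a i : ℝ) * Complex.I)‖
      ≤ ∑ i, ‖(p i : ℂ) * Complex.exp ((Real.pi * ζ * a i : ℝ) * Complex.I)‖ :=
        norm_sum_le _ _
    _ = ∑ i, p i := by
        refine Finset.sum_congr rfl fun i _ => ?_
        rw [norm_mul]
        simp [Complex.norm_exp, abs_of_nonneg (hp i)]
    _ = 1 := hpsum

lemma Phi_contract (m : ℕ) (hm : 2 ≤ m) (a : Fin m → ℝ)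
    (ha0 : a ⟨0, by omega⟩ = 0) (ha1 : a ⟨1, by omega⟩ = 1)
    (p : Fin m → ℝ) (hp : ∀ i, 0 < p i) (hpsum : ∑ i, p i = 1)
    (ℓ : ℕ) (hℓ : 0 < ℓ) (ζ : ℝ) (hζ : 1 / (ℓ:ℝ) ≤ |ζ - round ζ|) :
    ‖∑ i, (p i : ℂ) * Complex.exp ((Real.pi * ζ * a i : ℝ) * Complex.I)‖ ≤
      1 - p ⟨0, by omega⟩ - p ⟨1, by omega⟩ +
        Real.sqrt ((p ⟨0, by omega⟩ + p ⟨1, by omega⟩)^2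
          - 2 * p ⟨0, by omega⟩ * p ⟨1, by omega⟩ * (1 - Real.cos (Real.pi / ℓ))) := by
  set i0 : Fin m := ⟨0, by omega⟩
  set i1 : Fin m := ⟨1, by omega⟩
  have hne : i1 ≠ i0 := by simp [i0, i1, Fin.ext_iff]
  set f : Fin m → ℂ := fun i => (p i : ℂ) * Complex.exp ((Real.pi * ζ * a i : ℝ) * Complex.I)
    with hf
  have hsplit : ∑ i, f i = f i0 + f i1 + ∑ i ∈ (Finset.univ.erase i0).erase i1, f i := by
    rw [add_assoc, Finset.add_sum_erase _ f (Finset.mem_erase.2 ⟨hne, Finset.mem_univ _⟩),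
      Finset.add_sum_erase _ f (Finset.mem_univ _)]
  have hpsplit : ∑ i ∈ (Finset.univ.erase i0).erase i1, p i = 1 - p i0 - p i1 := by
    have : ∑ i, p i = p i0 + p i1 + ∑ i ∈ (Finset.univ.erase i0).erase i1, p i := by
      rw [add_assoc, Finset.add_sum_erase _ p (Finset.mem_erase.2 ⟨hne, Finset.mem_univ _⟩),
        Finset.add_sum_erase _ p (Finset.mem_univ _)]
    rw [hpsum] at this; linarith
  have hcos : Real.cos (Real.pi * ζ) ≤ Real.cos (Real.pi / ℓ) := cos_le_of_distInt ζ ℓ hℓ hζ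
  -- main part
  have hmain : ‖f i0 + f i1‖ ≤ Real.sqrt ((p i0 + p i1)^2
      - 2 * p i0 * p i1 * (1 - Real.cos (Real.pi / ℓ))) := by
    have hval : f i0 + f i1 = Complex.ofReal (p i0 + p i1 * Real.cos (Real.pi * ζ))
        + Complex.ofReal (p i1 * Real.sin (Real.pi * ζ)) * Complex.I := by
      rw [hf]
      simp only [ha0, ha1, mul_zero, mul_one]
      apply Complex.ext
      · simp [Complex.add_re, Complex.mul_re, ← Complex.ofReal_mul,
          Complex.exp_ofReal_mul_I_re, Complex.exp_ofReal_mul_I_im]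
      · simp [Complex.add_im, Complex.mul_im, ← Complex.ofReal_mul,
          Complex.exp_ofReal_mul_I_re, Complex.exp_ofReal_mul_I_im]
    rw [hval, Complex.norm_def, Complex.normSq_add_mul_I]
    apply Real.sqrt_le_sqrt
    have hsc := Real.sin_sq_add_cos_sq (Real.pi * ζ)
    have hexp : (p i0 + p i1 * Real.cos (Real.pi * ζ))^2
        + (p i1 * Real.sin (Real.pi * ζ))^2
        = p i0^2 + p i1^2 + 2 * p i0 * p i1 * Real.cos (Real.pi * ζ) := by
      linear_combination (p i1)^2 * hsc
    have h2 := mul_le_mul_of_nonneg_left hcos (mul_pos (hp i0) (hp i1)).le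
    nlinarith [h2]
  have hrest : ‖∑ i ∈ (Finset.univ.erase i0).erase i1, f i‖ ≤ 1 - p i0 - p i1 := by
    rw [← hpsplit]
    refine le_trans (norm_sum_le _ _) (le_of_eq (Finset.sum_congr rfl fun i _ => ?_))
    rw [hf, norm_mul]
    simp [Complex.norm_exp, abs_of_nonneg (hp i).le]
  calc ‖∑ i, f i‖ = ‖f i0 + f i1 + ∑ i ∈ (Finset.univ.erase i0).erase i1, f i‖ := by
        rw [hsplit]
    _ ≤ ‖f i0 + f i1‖ + ‖∑ i ∈ (Finset.univ.erase i0).erase i1, f i‖ := norm_add_le _ _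
    _ ≤ _ := by linarith

lemma fourier_iter (lam : ℝ) (m : ℕ) (a : Fin m → ℝ) (p : Fin m → ℝ) (hp : ∀ i, 0 ≤ p i)
    (μ : Measure ℝ) [IsProbabilityMeasure μ]
    (hss : μ = ∑ i : Fin m,
      ENNReal.ofReal (p i) • Measure.map (fun x => lam * x + a i) μ) (ξ : ℝ) (N : ℕ) :
    fourierM μ ξ = (∏ k ∈ Finset.range N,
        ∑ i, (p i : ℂ) * Complex.exp ((Real.pi * (lam^k * ξ) * a i : ℝ) * Complex.I))
      * fourierM μ (lam^N * ξ) := by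
  induction N with
  | zero => simp
  | succ N ih =>
    rw [ih, Finset.prod_range_succ, funeq lam m a p hp μ hss (lam^N * ξ)]
    have : lam * (lam^N * ξ) = lam^(N+1) * ξ := by ring
    rw [this]
    ring

lemma fourier_norm_iter (lam : ℝ) (m : ℕ) (a : Fin m → ℝ) (p : Fin m → ℝ) (hp : ∀ i, 0 ≤ p i)
    (μ : Measure ℝ) [IsProbabilityMeasure μ]
    (hss : μ = ∑ i : Fin m,
      ENNReal.ofReal (p i) • Measure.map (fun x => lam * x + a i) μ) (ξ : ℝ) (N : ℕ) :
    ‖fourierM μ ξ‖ ≤ ∏ k ∈ Finset.range N,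
        ‖∑ i, (p i : ℂ) * Complex.exp ((Real.pi * (lam^k * ξ) * a i : ℝ) * Complex.I)‖ := by
  rw [fourier_iter lam m a p hp μ hss ξ N, norm_mul, norm_prod]
  calc (∏ k ∈ Finset.range N, ‖∑ i, (p i : ℂ) *
          Complex.exp ((Real.pi * (lam^k * ξ) * a i : ℝ) * Complex.I)‖) * ‖fourierM μ (lam^N * ξ)‖
      ≤ (∏ k ∈ Finset.range N, ‖∑ i, (p i : ℂ) *
          Complex.exp ((Real.pi * (lam^k * ξ) * a i : ℝ) * Complex.I)‖) * 1 := by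
        apply mul_le_mul_of_nonneg_left (fourier_le_one μ _)
        exact Finset.prod_nonneg fun k _ => norm_nonneg _
    _ = _ := mul_one _

lemma fourierM_neg (μ : Measure ℝ) (ξ : ℝ) :
    fourierM μ (-ξ) = starRingEnd ℂ (fourierM μ ξ) := by
  rw [fourierM, fourierM, ← integral_conj]
  congr 1
  ext x
  rw [← Complex.exp_conj]
  congr 1
  simp only [map_mul, Complex.conj_ofReal, Complex.conj_I]
  push_cast
  ring

lemma cos_pi_div_lt_one (ℓ : ℕ) (hℓ : 0 < ℓ) : Real.cos (Real.pi / ℓ) < 1 := by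
  have hπ := Real.pi_pos
  have hℓ1 : (1:ℝ) ≤ ℓ := by exact_mod_cast hℓ
  have hx : 0 < Real.pi / ℓ := by positivity
  have hle : Real.pi / ℓ ≤ Real.pi := by
    rw [div_le_iff₀ (by linarith)]; nlinarith
  rcases lt_or_eq_of_le (Real.cos_le_one (Real.pi / ℓ)) with h | h
  · exact h
  · exfalso
    rw [Real.cos_eq_one_iff_of_lt_of_lt (by linarith) (by linarith)] at h
    linarith

set_option maxHeartbeats 2000000 in
theorem stmt7
    (lam : ℝ) (hlam0 : 0 < lam) (hlam1 : lam < 1)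
    (hcomb : ∃ ℓ : ℕ, 0 < ℓ ∧ ∃ c > (0 : ℝ), ∃ N₀ : ℕ, ∀ N ≥ N₀,
      ∀ t ∈ Set.Icc (1 : ℝ) lam⁻¹,
        c * N ≤ ((Finset.range N).filter
          (fun n => (1 : ℝ) / ℓ ≤ distInt (t * lam⁻¹ ^ n))).card)
    (m : ℕ) (hm : 2 ≤ m) (a : Fin m → ℝ) (ha : Function.Injective a)
    (ha0 : a ⟨0, by omega⟩ = 0) (ha1 : a ⟨1, by omega⟩ = 1)
    (p : Fin m → ℝ) (hp : ∀ i, 0 < p i) (hpsum : ∑ i, p i = 1)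
    (μ : Measure ℝ) [IsProbabilityMeasure μ]
    (hss : μ = ∑ i : Fin m,
      ENNReal.ofReal (p i) • Measure.map (fun x => lam * x + a i) μ) :
    ∃ C > (0 : ℝ), ∃ s > (0 : ℝ), ∀ ξ : ℝ, ξ ≠ 0 →
      ‖fourierM μ ξ‖ ≤ C * |ξ| ^ (-s) := by
  obtain ⟨ℓ, hℓ, c, hc, N₀, hN₀⟩ := hcomb
  have hp' : ∀ i, 0 ≤ p i := fun i => (hp i).le
  set i0 : Fin m := ⟨0, by omega⟩
  set i1 : Fin m := ⟨1, by omega⟩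
  set B0 : ℝ := 1 - p i0 - p i1 + Real.sqrt ((p i0 + p i1)^2
      - 2 * p i0 * p i1 * (1 - Real.cos (Real.pi / ℓ))) with hB0def
  have hB0lt : B0 < 1 := by
    have hcosl : Real.cos (Real.pi / ℓ) < 1 := cos_pi_div_lt_one ℓ hℓ
    have hsq : (p i0 + p i1)^2 - 2 * p i0 * p i1 * (1 - Real.cos (Real.pi / ℓ))
        < (p i0 + p i1)^2 := by nlinarith [mul_pos (hp i0) (hp i1)]
    have hsqrt : Real.sqrt ((p i0 + p i1)^2
        - 2 * p i0 * p i1 * (1 - Real.cos (Real.pi / ℓ))) < p i0 + p i1 :=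
      (Real.sqrt_lt' (add_pos (hp i0) (hp i1))).2 (by nlinarith)
    rw [hB0def]; linarith
  set B : ℝ := max B0 (1/2) with hBdef
  have hBpos : 0 < B := lt_of_lt_of_le (by norm_num) (le_max_right _ _)
  have hB1 : B < 1 := max_lt hB0lt (by norm_num)
  have hBle : B ≤ 1 := hB1.le
  have hPhiB : ∀ ζ : ℝ, 1 / (ℓ:ℝ) ≤ distInt ζ →
      ‖∑ i, (p i : ℂ) * Complex.exp ((Real.pi * ζ * a i : ℝ) * Complex.I)‖ ≤ B := by
    intro ζ hζ
    exact le_trans (Phi_contract m hm a ha0 ha1 p hp hpsum ℓ hℓ ζ hζ) (le_max_left _ _)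
  have hPhi1 : ∀ ζ : ℝ,
      ‖∑ i, (p i : ℂ) * Complex.exp ((Real.pi * ζ * a i : ℝ) * Complex.I)‖ ≤ 1 :=
    Phi_le_one m a p hp' hpsum
  have hθ : 1 < lam⁻¹ := by
    have h1 : lam * lam⁻¹ = 1 := mul_inv_cancel₀ hlam0.ne'
    nlinarith [inv_pos.2 hlam0]
  have hθpos : (0:ℝ) < lam⁻¹ := by linarith
  have hlogθ : 0 < Real.log lam⁻¹ := Real.log_pos hθ
  have hlogB : Real.log B < 0 := Real.log_neg hBpos hB1
  set s : ℝ := -(c * Real.log B) / Real.log lam⁻¹ with hsdef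
  have hs : 0 < s := div_pos (by nlinarith) hlogθ
  set M : ℕ := max N₀ 1 with hMdef
  set T : ℝ := lam⁻¹ ^ M with hTdef
  have hT1 : (1:ℝ) ≤ T := one_le_pow₀ hθ.le
  have hTpos : (0:ℝ) < T := by positivity
  set C : ℝ := B ^ (-(c:ℝ)) + T ^ s with hCdef
  have hBc : (0:ℝ) < B ^ (-(c:ℝ)) := Real.rpow_pos_of_pos hBpos _
  have hTs : (0:ℝ) < T ^ s := Real.rpow_pos_of_pos hTpos _
  have hCpos : 0 < C := by positivity
  refine ⟨C, hCpos, s, hs, ?_⟩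
  have key : ∀ ξ : ℝ, 0 < ξ → ‖fourierM μ ξ‖ ≤ C * ξ ^ (-s) := by
    intro ξ hξpos
    by_cases hbig : T ≤ ξ
    · -- large frequency
      set N : ℕ := ⌊Real.logb lam⁻¹ ξ⌋₊ with hNdef
      have hlogb_ge : (M:ℝ) ≤ Real.logb lam⁻¹ ξ := by
        rw [Real.le_logb_iff_rpow_le hθ hξpos, Real.rpow_natCast]
        exact hbig
      have hNM : M ≤ N := Nat.le_floor hlogb_ge
      have hN₀' : N₀ ≤ N := le_trans (le_max_left _ _) hNM
      have hlogb_nonneg : 0 ≤ Real.logb lam⁻¹ ξ :=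
        le_trans (by positivity) hlogb_ge
      have hN1 : (N:ℝ) ≤ Real.logb lam⁻¹ ξ := Nat.floor_le hlogb_nonneg
      have hN2 : Real.logb lam⁻¹ ξ < N + 1 := Nat.lt_floor_add_one _
      have hpow_le : lam⁻¹ ^ N ≤ ξ := by
        calc lam⁻¹ ^ N = lam⁻¹ ^ (N:ℝ) := (Real.rpow_natCast _ _).symm
          _ ≤ lam⁻¹ ^ Real.logb lam⁻¹ ξ := Real.rpow_le_rpow_of_exponent_le hθ.le hN1
          _ = ξ := Real.rpow_logb hθpos hθ.ne' hξpos
      have hpow_gt : ξ < lam⁻¹ ^ (N+1) := by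
        calc ξ = lam⁻¹ ^ Real.logb lam⁻¹ ξ := (Real.rpow_logb hθpos hθ.ne' hξpos).symm
          _ < lam⁻¹ ^ ((N:ℝ)+1) := Real.rpow_lt_rpow_of_exponent_lt hθ hN2
          _ = lam⁻¹ ^ (N+1) := by rw [← Real.rpow_natCast lam⁻¹ (N+1)]; push_cast; ring_nf
      set t : ℝ := ξ * lam ^ N with htdef
      have hcancN : lam ^ N * lam⁻¹ ^ N = 1 := by
        rw [← mul_pow, mul_inv_cancel₀ hlam0.ne', one_pow]
      have ht1 : 1 ≤ t := by
        have := mul_le_mul_of_nonneg_right hpow_le (pow_nonneg hlam0.le N)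
        rw [htdef]; nlinarith
      have ht2 : t ≤ lam⁻¹ := by
        have h2 := mul_le_mul_of_nonneg_right hpow_gt.le (pow_nonneg hlam0.le N)
        have h3 : lam⁻¹ ^ (N+1) * lam ^ N = lam⁻¹ := by
          rw [pow_succ]
          calc lam⁻¹ ^ N * lam⁻¹ * lam ^ N = (lam ^ N * lam⁻¹ ^ N) * lam⁻¹ := by ring
            _ = lam⁻¹ := by rw [hcancN, one_mul]
        rw [htdef]; nlinarith
      have hcard := hN₀ N hN₀' t ⟨ht1, ht2⟩
      set S := (Finset.range N).filter
        (fun n => (1 : ℝ) / ℓ ≤ distInt (t * lam⁻¹ ^ n)) with hSdef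
      set g : ℕ → ℝ := fun n =>
        ‖∑ i, (p i : ℂ) * Complex.exp ((Real.pi * (t * lam⁻¹ ^ n) * a i : ℝ) * Complex.I)‖
        with hgdef
      have hg0 : ∀ n, 0 ≤ g n := fun n => norm_nonneg _
      have hg1 : ∀ n, g n ≤ 1 := fun n => hPhi1 _
      have harg : ∀ k ≤ N, lam ^ k * ξ = t * lam⁻¹ ^ (N - k) := by
        intro k hk
        have hsplitpow : lam ^ N = lam ^ (N - k) * lam ^ k := by
          rw [← pow_add]; congr 1; omega
        have hcanc : lam ^ (N-k) * lam⁻¹ ^ (N-k) = 1 := by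
          rw [← mul_pow, mul_inv_cancel₀ hlam0.ne', one_pow]
        rw [htdef, hsplitpow]
        linear_combination -(ξ * lam ^ k) * hcanc
      have step1 : ‖fourierM μ ξ‖ ≤ ∏ k ∈ Finset.range (N+1), g (N - k) := by
        refine le_trans (fourier_norm_iter lam m a p hp' μ hss ξ (N+1)) (le_of_eq ?_)
        refine Finset.prod_congr rfl fun k hk => ?_
        rw [hgdef]
        congr 2
        rw [harg k (by simpa using Nat.lt_succ_iff.1 (Finset.mem_range.1 hk))]
      have step2 : ∏ k ∈ Finset.range (N+1), g (N - k) = ∏ n ∈ Finset.range (N+1), g n := by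
        simpa using Finset.prod_range_reflect g (N+1)
      have step3 : ∏ n ∈ Finset.range (N+1), g n ≤ ∏ n ∈ Finset.range N, g n := by
        rw [Finset.prod_range_succ]
        have hnn : 0 ≤ ∏ n ∈ Finset.range N, g n := Finset.prod_nonneg fun n _ => hg0 n
        nlinarith [hg1 N, hg0 N]
      have step4 : ∏ n ∈ Finset.range N, g n ≤ B ^ S.card := by
        calc ∏ n ∈ Finset.range N, g n
            ≤ ∏ n ∈ Finset.range N, (if n ∈ S then B else 1) := by
              refine Finset.prod_le_prod (fun n _ => hg0 n) (fun n hn => ?_)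
              by_cases hns : n ∈ S
              · simp only [hns, if_true]
                rw [hSdef] at hns
                exact hPhiB _ (Finset.mem_filter.1 hns).2
              · simp only [hns, if_false]
                exact hg1 n
          _ = ∏ n ∈ Finset.range N ∩ S, B := by
              rw [← Finset.prod_ite_mem]
          _ = B ^ S.card := by
              rw [Finset.inter_eq_right.2 (Finset.filter_subset _ _), Finset.prod_const]
      have step5 : (B:ℝ) ^ S.card ≤ B ^ (c * N) := by
        rw [← Real.rpow_natCast B S.card]
        exact Real.rpow_le_rpow_of_exponent_ge hBpos hBle hcard
      have step6 : B ^ (c * N) ≤ B ^ (-(c:ℝ)) * ξ ^ (-s) := by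
        have e1 : Real.log ξ = Real.logb lam⁻¹ ξ * Real.log lam⁻¹ := by
          rw [Real.logb, div_mul_cancel₀ _ hlogθ.ne']
        rw [Real.rpow_def_of_pos hBpos (c * N), Real.rpow_def_of_pos hBpos (-(c:ℝ)),
          Real.rpow_def_of_pos hξpos (-s), ← Real.exp_add]
        apply Real.exp_le_exp.2
        have hNlb : Real.logb lam⁻¹ ξ - 1 < (N:ℝ) := by linarith
        have hgoal : Real.log B * (c * N) ≤ Real.log B * (c * (Real.logb lam⁻¹ ξ - 1)) := by
          apply mul_le_mul_of_nonpos_left _ hlogB.le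
          nlinarith
        refine le_trans hgoal (le_of_eq ?_)
        have e2 : Real.log ξ * (-s) = Real.log B * (c * Real.logb lam⁻¹ ξ) := by
          have hmi : Real.log lam⁻¹ * (Real.log lam⁻¹)⁻¹ = 1 := mul_inv_cancel₀ hlogθ.ne'
          rw [hsdef, e1]
          linear_combination (Real.logb lam⁻¹ ξ * c * Real.log B) * hmi
        linarith [e2]
      calc ‖fourierM μ ξ‖ ≤ ∏ k ∈ Finset.range (N+1), g (N - k) := step1
        _ = ∏ n ∈ Finset.range (N+1), g n := step2
        _ ≤ ∏ n ∈ Finset.range N, g n := step3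
        _ ≤ B ^ S.card := step4
        _ ≤ B ^ (c * N) := step5
        _ ≤ B ^ (-(c:ℝ)) * ξ ^ (-s) := step6
        _ ≤ C * ξ ^ (-s) := by
            apply mul_le_mul_of_nonneg_right _ (Real.rpow_pos_of_pos hξpos _).le
            rw [hCdef]; linarith
    · -- small frequency
      push_neg at hbig
      have h1 : ‖fourierM μ ξ‖ ≤ 1 := fourier_le_one μ ξ
      have h2 : T ^ (-s) ≤ ξ ^ (-s) :=
        Real.rpow_le_rpow_of_nonpos hξpos hbig.le (by linarith)
      have h3 : T ^ s * T ^ (-s) = 1 := by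
        rw [← Real.rpow_add hTpos]; simp
      have h4 : (1:ℝ) ≤ T ^ s * ξ ^ (-s) := by
        rw [← h3]
        exact mul_le_mul_of_nonneg_left h2 hTs.le
      calc ‖fourierM μ ξ‖ ≤ 1 := h1
        _ ≤ T ^ s * ξ ^ (-s) := h4
        _ ≤ C * ξ ^ (-s) := by
            apply mul_le_mul_of_nonneg_right _ (Real.rpow_pos_of_pos hξpos _).le
            rw [hCdef]; linarith
  intro ξ hξ
  rcases lt_or_gt_of_ne hξ with hneg | hpos
  · have : fourierM μ ξ = starRingEnd ℂ (fourierM μ (-ξ)) := by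
      rw [← fourierM_neg μ (-ξ), neg_neg]
    rw [this, RCLike.norm_conj, abs_of_neg hneg]
    exact key (-ξ) (by linarith)
  · rw [abs_of_pos hpos]
    exact key ξ hpos
end
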